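/- Let C be a finite poset such that for every n ≤ |C|, any two downward-closed subsets of cardinality n are order-isomorphic. Then C is Newtonian: for all x, y in C, if L(x) > L(y) then y ≺ x, where L denotes level. -/

import Mathlib

/-- The level of `x`: the cardinality of the longest chain with maximal element `x`. -/
noncomputable def level {α : Type*} [PartialOrder α] (x : α) : ℕ∞ :=
  Set.chainHeight {y | y ≤ x} (· < ·)

section Aux

variable {α : Type*} [PartialOrder α]

lemma aux_chainHeight_ne_top [Fintype α] (s : Set α) : s.chainHeight (· < ·) ≠ ⊤ :=
  Set.chainHeight_ne_top_of_finite s _ s.toFinite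

lemma aux_level_mono {x y : α} (h : x ≤ y) : level x ≤ level y :=
  Set.chainHeight_mono (r := (· < ·)) (h := fun _ hz => le_trans hz h)

lemma aux_level_strictMono [Fintype α] {x y : α} (h : x < y) : level x < level y := by
  obtain ⟨t, hts, hte, htc⟩ :=
    Set.exists_eq_chainHeight_of_finite {z | z ≤ x} (· < ·) (Set.toFinite _)
  have hyt : y ∉ t := fun hy => (hts hy).not_gt h
  have hc : IsChain (· < ·) (insert y t) :=
    htc.insert (fun b hb _ => Or.inr (lt_of_le_of_lt (hts hb) h))
  have hsub : insert y t ⊆ {z | z ≤ y} := by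
    rintro z (rfl | hz)
    · exact le_refl z
    · exact le_trans (hts hz) h.le
  have h4 := Set.encard_le_chainHeight_of_isChain {z | z ≤ y} (insert y t) hsub hc
  rw [Set.encard_insert_of_notMem hyt, hte] at h4
  have h3 : level x + 1 ≤ level y := h4
  exact (ENat.add_one_le_iff (aux_chainHeight_ne_top _)).mp h3

lemma aux_length_le_level {t : Set α} (hc : IsChain (· < ·) t) {g : α}
    (hg : Maximal (· ∈ t) g) : t.encard ≤ level g := by
  apply Set.encard_le_chainHeight_of_isChain _ _ _ hc
  intro z hz
  by_cases hzg : z = g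
  · exact le_of_eq hzg
  · rcases hc hz hg.1 hzg with h1 | h1
    · exact h1.le
    · exact hg.2 hz h1.le

/-- The chain height of a set is invariant under order isomorphism of the
corresponding subtypes. -/
lemma aux_chainHeight_eq_of_orderIso {S T : Set α} (e : S ≃o T) :
    S.chainHeight (· < ·) = T.chainHeight (· < ·) := by
  have := Set.chainHeight_eq_of_relIso (Set.univ : Set S) e.toRelIsoLT
  rw [Set.image_univ, e.toRelIsoLT.surjective.range_eq, Set.chainHeight_coe_univ_lt,
    Set.chainHeight_coe_univ_lt] at this
  exact this.symm

end Aux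

/-- If in a finite poset any two downward-closed subsets of the same
cardinality `n ≤ |C|` are order-isomorphic, then the poset is Newtonian. -/
theorem stems_iso_implies_newtonian
    {α : Type} [PartialOrder α] [Fintype α]
    (h : ∀ n : ℕ, n ≤ Fintype.card α →
      ∀ S T : Set α, IsLowerSet S → IsLowerSet T →
        S.ncard = n → T.ncard = n → Nonempty (S ≃o T)) :
    ∀ x y : α, level y < level x → y < x := by
  intro x y hxy
  by_contra hyx
  have hyne : y ≠ x := by rintro rfl; exact lt_irrefl _ hxy
  have hynle : ¬ y ≤ x := fun hle => hyx (hle.lt_of_ne hyne)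
  set S : Set α := {z | z ≤ x} ∪ {z | level z ≤ level y} with hS
  have hxS : x ∈ S := Or.inl (le_refl x)
  have hyS : y ∈ S := Or.inr (show level y ≤ level y from le_refl _)
  -- lower set facts
  have hlow : IsLowerSet S :=
    IsLowerSet.union (fun a b hba ha => le_trans hba ha)
      (fun a b hba ha => le_trans (aux_level_mono hba) ha)
  have hxmax : ∀ b ∈ S, ¬ x < b := by
    rintro b (hb | hb) hxb
    · exact absurd (le_antisymm hb hxb.le) hxb.ne'
    · exact absurd (lt_of_lt_of_le (aux_level_strictMono hxb) hb) (not_lt_of_gt hxy)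
  have hymax : ∀ b ∈ S, ¬ y < b := by
    rintro b (hb | hb) hyb
    · exact hyx (lt_of_lt_of_le hyb hb)
    · exact absurd (lt_of_lt_of_le (aux_level_strictMono hyb) hb) (lt_irrefl _)
  have hlowx : IsLowerSet (S \ {x}) := by
    rintro b a hab ⟨hbS, hbx⟩
    refine ⟨hlow hab hbS, fun hax => ?_⟩
    have hax' : a = x := hax
    exact hbx ((hax' ▸ hab : x ≤ b).lt_or_eq.resolve_left (hxmax b hbS)).symm
  have hlowy : IsLowerSet (S \ {y}) := by
    rintro b a hab ⟨hbS, hby⟩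
    refine ⟨hlow hab hbS, fun hay => ?_⟩
    have hay' : a = y := hay
    exact hby ((hay' ▸ hab : y ≤ b).lt_or_eq.resolve_left (hymax b hbS)).symm
  -- cardinalities
  have hcx : (S \ {x}).ncard = S.ncard - 1 := Set.ncard_diff_singleton_of_mem hxS
  have hcy : (S \ {y}).ncard = S.ncard - 1 := Set.ncard_diff_singleton_of_mem hyS
  have hn : (S \ {x}).ncard ≤ Fintype.card α := by
    have := Set.ncard_le_ncard (Set.subset_univ (S \ {x})) Set.finite_univ
    rwa [Set.ncard_univ, Nat.card_eq_fintype_card] at this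
  obtain ⟨e⟩ := h _ hn (S \ {x}) (S \ {y}) hlowx hlowy rfl (hcy.trans hcx.symm)
  -- chain height comparisons
  have hge : level x ≤ (S \ {y}).chainHeight (· < ·) := by
    apply Set.chainHeight_mono
    intro z hz
    exact ⟨Or.inl hz, fun he => hynle (he ▸ hz)⟩
  have hsubU : S \ {x} ⊆ {z | level z < level x} := by
    rintro z ⟨hzS, hzx⟩
    rcases hzS with hz | hz
    · exact aux_level_strictMono (lt_of_le_of_ne hz hzx)
    · exact lt_of_le_of_lt hz hxy
  -- level x is a nonzero natural number
  obtain ⟨m, hm⟩ := WithTop.ne_top_iff_exists.mp (aux_chainHeight_ne_top {z | z ≤ x})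
  have hmlevel : level x = (m : ℕ∞) := hm.symm
  have hmpos : 1 ≤ m := by
    by_contra hc
    interval_cases m
    have : level y < 0 := by rwa [hmlevel, Nat.cast_zero] at hxy
    exact absurd this (by simp)
  have hlt : (S \ {x}).chainHeight (· < ·) < level x := by
    have hb : (S \ {x}).chainHeight (· < ·) ≤ ((m - 1 : ℕ) : ℕ∞) := by
      obtain ⟨t, hts, hte, htc⟩ :=
        Set.exists_eq_chainHeight_of_finite (S \ {x}) (· < ·) (Set.toFinite _)
      have hlt' : (S \ {x}).chainHeight (· < ·) < level x := by
        rw [← hte]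
        rcases t.eq_empty_or_nonempty with rfl | hne
        · simpa using lt_of_le_of_lt (show (0 : ℕ∞) ≤ level y from zero_le) hxy
        · obtain ⟨g, hg⟩ := ((S \ {x}).toFinite.subset hts).exists_maximal hne
          exact lt_of_le_of_lt (aux_length_le_level htc hg) (hsubU (hts hg.1))
      rw [hmlevel] at hlt'
      obtain ⟨k, hk⟩ := ENat.ne_top_iff_exists.mp (aux_chainHeight_ne_top (S \ {x}))
      rw [← hk] at hlt' ⊢
      have h4 : k < m := Nat.cast_lt.mp hlt'
      exact Nat.cast_le.mpr (by omega)
    calc (S \ {x}).chainHeight (· < ·) ≤ ((m - 1 : ℕ) : ℕ∞) := hb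
      _ < (m : ℕ∞) := by exact_mod_cast Nat.sub_lt (by omega) one_pos
      _ = level x := hmlevel.symm
  have heq : (S \ {x}).chainHeight (· < ·) = (S \ {y}).chainHeight (· < ·) :=
    aux_chainHeight_eq_of_orderIso e
  exact absurd (lt_of_le_of_lt (heq ▸ hge) hlt) (lt_irrefl _)
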